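/- Fix τ > 0 and set λ₀ = e^{−τ}, λ₁ = (1+τ)e^{−τ}. Define for η ∈ (0,1]: Q(η) = 2(1−η)λ₀(1−λ₀) + η(λ₀ + λ₁ − 2λ₀λ₁), c(η) = (λ₀/2)·(1 − (1−η)λ₀ − ηλ₁), E(η) = 2c(η)/Q(η), and the key rate r(η) = Q(η)·(1 − h₂(E(η))), where h₂(x) = −x·log₂ x − (1−x)·log₂(1−x) is the binary entropy with logarithm in base 2. Then lim_{η → 0⁺} r(η)/η² = τ²/((e^τ − 1)·ln 16), where ln denotes the natural logarithm. -/

import Mathlib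

open Filter

lemma phiA : Tendsto (fun δ : ℝ => Real.log (1 - 4*δ^2) / δ^2)
    (nhdsWithin 0 (Set.Ioi 0)) (nhds (-4)) := by
  have hf : HasDerivAt (fun u : ℝ => Real.log (1 + u)) 1 0 := by
    have h1 : HasDerivAt (fun u : ℝ => 1 + u) 1 0 := (hasDerivAt_id 0).const_add 1
    have := (Real.hasDerivAt_log (by norm_num : (1:ℝ) + 0 ≠ 0)).comp 0 h1
    simpa [Function.comp_def] using this
  have hs : Tendsto (fun u : ℝ => Real.log (1 + u) / u)
      (nhdsWithin 0 {(0:ℝ)}ᶜ) (nhds 1) := by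
    have := hasDerivAt_iff_tendsto_slope.mp hf
    refine this.congr fun u => ?_
    simp [slope_def_field, div_eq_div_iff]
  -- map δ ↦ -(4δ²) from 𝓝[>]0 to 𝓝[≠]0
  have hmap : Tendsto (fun δ : ℝ => -(4*δ^2)) (nhdsWithin 0 (Set.Ioi 0))
      (nhdsWithin 0 {(0:ℝ)}ᶜ) := by
    rw [tendsto_nhdsWithin_iff]
    constructor
    · have : Continuous (fun δ : ℝ => -(4*δ^2)) := by continuity
      have h0 := this.tendsto 0
      simpa using h0.mono_left nhdsWithin_le_nhds
    · filter_upwards [self_mem_nhdsWithin] with δ (hδ : 0 < δ)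
      simp only [Set.mem_compl_iff, Set.mem_singleton_iff]
      nlinarith
  have hcomp := hs.comp hmap
  have : Tendsto (fun δ : ℝ => Real.log (1 + -(4*δ^2)) / (-(4*δ^2)) * (-4))
      (nhdsWithin 0 (Set.Ioi 0)) (nhds (-4)) := by
    have := hcomp.mul_const (-4)
    simpa using this
  refine this.congr' ?_
  filter_upwards [self_mem_nhdsWithin] with δ (hδ : 0 < δ)
  have hδ2 : δ^2 ≠ 0 := by positivity
  rw [div_mul_eq_mul_div, div_eq_div_iff (by nlinarith) hδ2]
  ring_nf

lemma phiB : Tendsto (fun δ : ℝ => (Real.log (1 + 2*δ) - Real.log (1 - 2*δ)) / δ)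
    (nhdsWithin 0 (Set.Ioi 0)) (nhds 4) := by
  have h1 : HasDerivAt (fun δ : ℝ => Real.log (1 + 2*δ)) 2 0 := by
    have hi : HasDerivAt (fun δ : ℝ => 1 + 2*δ) 2 0 := by
      simpa using ((hasDerivAt_id (0:ℝ)).const_mul 2).const_add 1
    have := (Real.hasDerivAt_log (by norm_num : (1:ℝ) + 2*0 ≠ 0)).comp 0 hi
    simpa [Function.comp_def] using this
  have h2 : HasDerivAt (fun δ : ℝ => Real.log (1 - 2*δ)) (-2) 0 := by
    have hi : HasDerivAt (fun δ : ℝ => 1 - 2*δ) (-2) 0 := by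
      simpa [sub_eq_add_neg] using (((hasDerivAt_id (0:ℝ)).const_mul 2).neg).const_add 1
    have := (Real.hasDerivAt_log (by norm_num : (1:ℝ) - 2*0 ≠ 0)).comp 0 hi
    simpa [Function.comp_def] using this
  have hg : HasDerivAt (fun δ : ℝ => Real.log (1 + 2*δ) - Real.log (1 - 2*δ)) 4 0 := by
    have := h1.sub h2
    norm_num at this
    exact this
  have := hasDerivAt_iff_tendsto_slope.mp hg
  have h := this.mono_left (nhdsWithin_mono 0 (by intro x hx; exact ne_of_gt hx))
  refine h.congr fun δ => ?_
  simp [slope_def_field, div_eq_div_iff]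

lemma phi_tendsto : Tendsto (fun δ : ℝ => (1/2) * Real.log (1 - 4*δ^2) / δ^2 +
    (Real.log (1 + 2*δ) - Real.log (1 - 2*δ)) / δ)
    (nhdsWithin 0 (Set.Ioi 0)) (nhds 2) := by
  have hA := phiA.const_mul (1/2 : ℝ)
  have := hA.add phiB
  norm_num at this
  refine this.congr fun δ => ?_
  ring_nf

/-- For the pure-loss channel with transmissivity η and threshold τ, the key rate
r(η) = Q(η)(1 − h₂(E(η))) satisfies lim_{η→0⁺} r(η)/η² = τ²/((e^τ − 1) ln 16). -/
theorem pure_loss_key_rate_quadratic_scaling (τ : ℝ) (hτ : 0 < τ) :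
    let l0 : ℝ := Real.exp (-τ)
    let l1 : ℝ := (1 + τ) * Real.exp (-τ)
    let Q : ℝ → ℝ := fun η => 2 * (1 - η) * l0 * (1 - l0) + η * (l0 + l1 - 2 * l0 * l1)
    let c : ℝ → ℝ := fun η => (l0 / 2) * (1 - (1 - η) * l0 - η * l1)
    let E : ℝ → ℝ := fun η => 2 * c η / Q η
    let h2 : ℝ → ℝ := fun x => -x * Real.logb 2 x - (1 - x) * Real.logb 2 (1 - x)
    let r : ℝ → ℝ := fun η => Q η * (1 - h2 (E η))
    Tendsto (fun η => r η / η ^ 2) (nhdsWithin 0 (Set.Ioi 0))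
      (nhds (τ ^ 2 / ((Real.exp τ - 1) * Real.log 16))) := by
  intro l0 l1 Q c E h2 r
  have hl0p : 0 < l0 := Real.exp_pos _
  have hl0lt : l0 < 1 := by
    have : Real.exp (-τ) < 1 := Real.exp_lt_one_iff.mpr (by linarith)
    exact this
  have hQ0 : 0 < 2 * l0 * (1 - l0) := by nlinarith
  have hlog2 : Real.log 2 ≠ 0 := ne_of_gt (Real.log_pos one_lt_two)
  -- continuity of Q
  have hQcont : Tendsto Q (nhdsWithin 0 (Set.Ioi 0)) (nhds (2 * l0 * (1 - l0))) := by
    have hc : Continuous Q := by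
      show Continuous fun η : ℝ => 2 * (1 - η) * l0 * (1 - l0) + η * (l0 + l1 - 2 * l0 * l1)
      continuity
    have h0 : Q 0 = 2 * l0 * (1 - l0) := by
      show 2 * (1 - (0:ℝ)) * l0 * (1 - l0) + 0 * (l0 + l1 - 2 * l0 * l1) = _
      ring
    simpa [h0] using (hc.tendsto 0).mono_left nhdsWithin_le_nhds
  have hQpos : ∀ᶠ η in nhdsWithin 0 (Set.Ioi 0), 0 < Q η :=
    hQcont.eventually (eventually_gt_nhds hQ0)
  set D : ℝ → ℝ := fun η => η * (τ * l0) / (2 * Q η) with hDdef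
  have hkey : ∀ η, Q η - 4 * c η = η * (τ * l0) := by
    intro η
    show (2 * (1 - η) * Real.exp (-τ) * (1 - Real.exp (-τ)) +
        η * (Real.exp (-τ) + (1 + τ) * Real.exp (-τ) -
          2 * Real.exp (-τ) * ((1 + τ) * Real.exp (-τ)))) -
      4 * ((Real.exp (-τ) / 2) * (1 - (1 - η) * Real.exp (-τ) - η * ((1 + τ) * Real.exp (-τ))))
        = η * (τ * Real.exp (-τ))
    ring
  have hE : ∀ᶠ η in nhdsWithin 0 (Set.Ioi 0), E η = 1 / 2 - D η := by
    filter_upwards [hQpos] with η hQη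
    have h2c : 2 * c η = (Q η - η * (τ * l0)) / 2 := by linear_combination (-1/2 : ℝ) * hkey η
    show 2 * c η / Q η = 1 / 2 - η * (τ * l0) / (2 * Q η)
    rw [h2c]
    field_simp
  -- D tends to 0 from the right
  have hDio : Tendsto D (nhdsWithin 0 (Set.Ioi 0)) (nhdsWithin 0 (Set.Ioi 0)) := by
    rw [tendsto_nhdsWithin_iff]
    constructor
    · have hnum : Tendsto (fun η : ℝ => η * (τ * l0)) (nhdsWithin 0 (Set.Ioi 0)) (nhds 0) := by
        have hc : Continuous fun η : ℝ => η * (τ * l0) := by continuity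
        simpa using (hc.tendsto 0).mono_left nhdsWithin_le_nhds
      have hden : Tendsto (fun η : ℝ => 2 * Q η) (nhdsWithin 0 (Set.Ioi 0))
          (nhds (2 * (2 * l0 * (1 - l0)))) := hQcont.const_mul 2
      have := hnum.div hden (by positivity)
      rw [zero_div] at this; exact this
    · filter_upwards [hQpos, self_mem_nhdsWithin] with η hQη (hη : 0 < η)
      show 0 < η * (τ * l0) / (2 * Q η)
      positivity
  have hDlt : ∀ᶠ η in nhdsWithin 0 (Set.Ioi 0), D η < 1 / 2 := by
    have h0 : Tendsto D (nhdsWithin 0 (Set.Ioi 0)) (nhds 0) := hDio.mono_right nhdsWithin_le_nhds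
    exact h0.eventually (eventually_lt_nhds (by norm_num))
  have hDpos : ∀ᶠ η in nhdsWithin 0 (Set.Ioi 0), 0 < D η := by
    filter_upwards [hDio.eventually self_mem_nhdsWithin] with η hη
    exact hη
  -- the composed phi limit
  have hφcomp : Tendsto (fun η => (1/2) * Real.log (1 - 4 * (D η)^2) / (D η)^2 +
      (Real.log (1 + 2 * D η) - Real.log (1 - 2 * D η)) / (D η))
      (nhdsWithin 0 (Set.Ioi 0)) (nhds 2) := phi_tendsto.comp hDio
  -- limits of the other factors
  have hconst : Tendsto (fun η => Q η / Real.log 2) (nhdsWithin 0 (Set.Ioi 0))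
      (nhds (2 * l0 * (1 - l0) / Real.log 2)) := hQcont.div_const _
  have hsq : Tendsto (fun η => ((τ * l0) / (2 * Q η))^2) (nhdsWithin 0 (Set.Ioi 0))
      (nhds (((τ * l0) / (2 * (2 * l0 * (1 - l0))))^2)) := by
    have hden : Tendsto (fun η => 2 * Q η) (nhdsWithin 0 (Set.Ioi 0))
        (nhds (2 * (2 * l0 * (1 - l0)))) := hQcont.const_mul 2
    have hq : Tendsto (fun η => (τ * l0) / (2 * Q η)) (nhdsWithin 0 (Set.Ioi 0))
        (nhds ((τ * l0) / (2 * (2 * l0 * (1 - l0))))) :=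
      Tendsto.div tendsto_const_nhds hden (by positivity)
    exact hq.pow 2
  have hT := (hconst.mul hφcomp).mul hsq
  -- value of the limit
  have hval : 2 * l0 * (1 - l0) / Real.log 2 * 2 * ((τ * l0) / (2 * (2 * l0 * (1 - l0))))^2
      = τ ^ 2 / ((Real.exp τ - 1) * Real.log 16) := by
    have h16 : Real.log 16 = 4 * Real.log 2 := by
      rw [show (16:ℝ) = 2 ^ 4 by norm_num, Real.log_pow]
      push_cast; ring
    have hexp : Real.exp τ = 1 / l0 := by
      show Real.exp τ = 1 / Real.exp (-τ)
      rw [Real.exp_neg]; field_simp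
    rw [h16, hexp]
    have h1l0 : (1:ℝ) - l0 ≠ 0 := by linarith
    field_simp
    ring
  rw [← hval]
  refine hT.congr' ?_
  filter_upwards [hE, hQpos, hDpos, hDlt, self_mem_nhdsWithin] with η hEη hQη hD1 hD2 hη'
  have hη : 0 < η := hη'
  set δ := D η with hδ
  have h1p : 0 < 1 - 2 * δ := by linarith
  have h2p : 0 < 1 + 2 * δ := by linarith
  -- rewrite 1 - h2 (E η)
  have e1 : 1 - h2 (E η) = ((1/2 - δ) * Real.log (1 - 2*δ) +
      (1/2 + δ) * Real.log (1 + 2*δ)) / Real.log 2 := by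
    rw [hEη]
    show 1 - (-(1/2 - δ) * Real.logb 2 (1/2 - δ) -
        (1 - (1/2 - δ)) * Real.logb 2 (1 - (1/2 - δ))) = _
    simp only [Real.logb]
    rw [show (1:ℝ) - (1/2 - δ) = 1/2 + δ by ring]
    rw [show (1:ℝ)/2 - δ = (1 - 2*δ)/2 by ring, show (1:ℝ)/2 + δ = (1 + 2*δ)/2 by ring]
    rw [Real.log_div (by linarith) (by norm_num), Real.log_div (by linarith) (by norm_num)]
    field_simp
    ring
  have hm : Real.log (1 - 4 * δ^2) = Real.log (1 - 2*δ) + Real.log (1 + 2*δ) := by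
    rw [show (1:ℝ) - 4 * δ^2 = (1 - 2*δ) * (1 + 2*δ) by ring,
      Real.log_mul (ne_of_gt h1p) (ne_of_gt h2p)]
  have hrel : τ * l0 = δ * (2 * Q η) / η := by
    rw [hδ, hDdef]
    field_simp
  show Q η / Real.log 2 * ((1/2) * Real.log (1 - 4 * δ^2) / δ^2 +
      (Real.log (1 + 2*δ) - Real.log (1 - 2*δ)) / δ) * ((τ * l0) / (2 * Q η))^2
    = Q η * (1 - h2 (E η)) / η^2
  rw [e1, hm, hrel]
  have hδ0 : δ ≠ 0 := ne_of_gt hD1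
  field_simp
  ring
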